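/- Let A ∈ ℝ^{N×N} be symmetric positive definite, B ∈ ℝ^{N×m}, and let Q ∈ ℝ^{N×s} have orthonormal columns (QᵀQ = I) such that the column span of Q contains the columns of A^{−j} B for every j = 0,1,…,k−1. Then Qᵀ A Q is symmetric positive definite, and for every integer i with 0 ≤ i ≤ 2k−2, Bᵀ A^{−i} B = (Qᵀ B)ᵀ (Qᵀ A Q)^{−i} (Qᵀ B). -/

import Mathlib

open Matrix

/-- Padé–Lanczos moment matching at λ = 0: if the column span of `Q`
(orthonormal columns) contains the columns of `A⁻ʲ B` for `j = 0, …, k-1`,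
with `A` symmetric positive definite, then `Qᵀ A Q` is positive definite and
the negative moments `Bᵀ A^{-i} B` are matched for `0 ≤ i ≤ 2k-2`. -/
theorem krylov_inverse_moment_matching {N m s k : ℕ}
    (A : Matrix (Fin N) (Fin N) ℝ) (hA : A.PosDef)
    (B : Matrix (Fin N) (Fin m) ℝ) (Q : Matrix (Fin N) (Fin s) ℝ)
    (hQ : Qᵀ * Q = 1)
    (hKrylov : ∀ j < k, ∃ C : Matrix (Fin s) (Fin m) ℝ, (A⁻¹) ^ j * B = Q * C) :
    (Qᵀ * A * Q).PosDef ∧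
      ∀ i : ℕ, i + 1 < 2 * k →
        Bᵀ * (A⁻¹) ^ i * B = (Qᵀ * B)ᵀ * ((Qᵀ * A * Q)⁻¹) ^ i * (Qᵀ * B) := by
  have hQH : Qᴴ = Qᵀ := by
    ext i j; simp [conjTranspose]
  have hcan : ∀ X : Matrix (Fin s) (Fin m) ℝ, Qᵀ * (Q * X) = X := by
    intro X; rw [← Matrix.mul_assoc, hQ, Matrix.one_mul]
  -- positive definiteness of T = Qᵀ A Q
  have hT : (Qᵀ * A * Q).PosDef := by
    refine PosDef.of_dotProduct_mulVec_pos ?_ ?_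
    · have := isHermitian_conjTranspose_mul_mul Q hA.1
      rwa [hQH] at this
    · intro x hx
      have hQx : Q *ᵥ x ≠ 0 := by
        intro h
        apply hx
        have : Qᵀ *ᵥ (Q *ᵥ x) = x := by
          rw [mulVec_mulVec, hQ, Matrix.one_mulVec]
        rw [h, mulVec_zero] at this
        exact this.symm
      have h0 := hA.dotProduct_mulVec_pos hQx
      simpa only [star_mulVec, dotProduct_mulVec, vecMul_vecMul, hQH] using h0
  refine ⟨hT, ?_⟩
  set T := Qᵀ * A * Q with hTdef
  have hAunit : IsUnit A.det := isUnit_iff_ne_zero.mpr (ne_of_gt hA.det_pos)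
  have hTunit : IsUnit T.det := isUnit_iff_ne_zero.mpr (ne_of_gt hT.det_pos)
  -- key lemma: for j < k, (A⁻¹)^j * B = Q * (T⁻¹)^j * (Qᵀ * B)
  have key : ∀ j < k, (A⁻¹) ^ j * B = Q * ((T⁻¹) ^ j * (Qᵀ * B)) := by
    intro j
    induction j with
    | zero =>
      intro hj
      obtain ⟨C, hC⟩ := hKrylov 0 hj
      simp only [pow_zero, Matrix.one_mul] at hC ⊢
      conv_rhs => rw [hC, hcan]
      exact hC
    | succ j ih =>
      intro hj
      have hjk : j < k := Nat.lt_of_succ_lt hj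
      obtain ⟨C, hC⟩ := hKrylov (j + 1) hj
      have h1 : A * (Q * C) = (A⁻¹) ^ j * B := by
        rw [← hC, pow_succ', Matrix.mul_assoc, ← Matrix.mul_assoc A, mul_nonsing_inv _ hAunit, Matrix.one_mul]
      have hTC : T * C = (T⁻¹) ^ j * (Qᵀ * B) := by
        have h2 := congrArg (Qᵀ * ·) h1
        rw [ih hjk, hcan] at h2
        calc T * C = Qᵀ * (A * (Q * C)) := by
              rw [hTdef, Matrix.mul_assoc, Matrix.mul_assoc]
          _ = T⁻¹ ^ j * (Qᵀ * B) := h2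
      have hCval : C = (T⁻¹) ^ (j + 1) * (Qᵀ * B) :=
        calc C = T⁻¹ * (T * C) := by
                rw [← Matrix.mul_assoc, nonsing_inv_mul _ hTunit, Matrix.one_mul]
          _ = T⁻¹ * ((T⁻¹) ^ j * (Qᵀ * B)) := by rw [hTC]
          _ = (T⁻¹) ^ (j + 1) * (Qᵀ * B) := by rw [← Matrix.mul_assoc, ← pow_succ']
      rw [hC, hCval]
  -- symmetry facts
  have hconj : ∀ {a b : ℕ} (M : Matrix (Fin a) (Fin b) ℝ), Mᴴ = Mᵀ := by
    intro a b M; ext i j; simp [conjTranspose]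
  have hAT : Aᵀ = A := by rw [← hconj A]; exact hA.1
  have hTT : Tᵀ = T := by rw [← hconj T]; exact hT.1
  have hAinvT : (A⁻¹)ᵀ = A⁻¹ := by rw [transpose_nonsing_inv, hAT]
  have hTinvT : (T⁻¹)ᵀ = T⁻¹ := by rw [transpose_nonsing_inv, hTT]
  intro i hi
  have hk : 1 ≤ k := by omega
  set p := min i (k - 1) with hp
  set q := i - p with hq
  have hpk : p < k := by omega
  have hqk : q < k := by omega
  have hpq : p + q = i := by omega
  have hBp := key p hpk
  have hBq := key q hqk
  have hsplit : Bᵀ * (A⁻¹) ^ i * B = ((A⁻¹) ^ p * B)ᵀ * ((A⁻¹) ^ q * B) := by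
    rw [transpose_mul, transpose_pow, hAinvT]
    simp only [Matrix.mul_assoc]
    rw [← Matrix.mul_assoc ((A⁻¹) ^ p) ((A⁻¹) ^ q) B, ← pow_add, hpq]
  rw [hsplit, hBp, hBq]
  simp only [transpose_mul, transpose_pow, transpose_transpose, hTinvT, Matrix.mul_assoc]
  rw [hcan]
  rw [← Matrix.mul_assoc ((T⁻¹) ^ p) ((T⁻¹) ^ q), ← pow_add, hpq]
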